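/- arXiv:1401.8055 — 2 statements merged into one kernel-verified Lean document; each statement's English description precedes it below -/
import Mathlib

section
/- Let X, Y be Hilbert spaces, K : X → Y compact with dense range, and v ∈ Y. For α > 0 set x_α = (αI + K*K)^{-1} K* v. Then K x_α → P v as α → 0⁺, where P is the orthogonal projection onto the closure of the range of K; in particular if the range of K is dense then K x_α → v in Y. -/
open ContinuousLinearMap RCLike in
lemma tikh_inner {X Y : Type*} [NormedAddCommGroup X] [InnerProductSpace ℂ X] [CompleteSpace X]
    [NormedAddCommGroup Y] [InnerProductSpace ℂ Y] [CompleteSpace Y]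
    (K : X →L[ℂ] Y) (α : ℝ) (x u : X)
    (hx : (α : ℂ) • x + (ContinuousLinearMap.adjoint K) (K x) = u) :
    α * ‖x‖^2 + ‖K x‖^2 = re (inner ℂ u x : ℂ) := by
  subst hx
  simp only [inner_add_left, inner_smul_left, ContinuousLinearMap.adjoint_inner_left, map_add,
    Complex.conj_ofReal, ← Complex.real_smul, RCLike.smul_re]
  rw [← @inner_self_eq_norm_sq ℂ, ← @inner_self_eq_norm_sq ℂ]

/-- `α ‖x‖ ≤ ‖u‖` when `(α I + K*K) x = u`. -/
lemma tikh_bound1 {X Y : Type*} [NormedAddCommGroup X] [InnerProductSpace ℂ X] [CompleteSpace X]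
    [NormedAddCommGroup Y] [InnerProductSpace ℂ Y] [CompleteSpace Y]
    (K : X →L[ℂ] Y) {α : ℝ} (hα : 0 < α) (x u : X)
    (hx : (α : ℂ) • x + (ContinuousLinearMap.adjoint K) (K x) = u) :
    α * ‖x‖ ≤ ‖u‖ := by
  have h := tikh_inner K α x u hx
  have h2 : α * ‖x‖^2 ≤ ‖u‖ * ‖x‖ := by
    calc α * ‖x‖^2 ≤ α * ‖x‖^2 + ‖K x‖^2 := le_add_of_nonneg_right (by positivity)
    _ = RCLike.re (inner ℂ u x : ℂ) := h
    _ ≤ ‖u‖ * ‖x‖ := re_inner_le_norm u x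
  rcases eq_or_lt_of_le (norm_nonneg x) with h0 | h0
  · rw [← h0]; simpa using norm_nonneg u
  · have := (mul_le_mul_iff_of_pos_right h0).mp (by nlinarith : (α * ‖x‖) * ‖x‖ ≤ ‖u‖ * ‖x‖)
    exact this

/-- `‖K x‖ ≤ ‖u‖ / √α` when `(α I + K*K) x = u`. -/
lemma tikh_bound2 {X Y : Type*} [NormedAddCommGroup X] [InnerProductSpace ℂ X] [CompleteSpace X]
    [NormedAddCommGroup Y] [InnerProductSpace ℂ Y] [CompleteSpace Y]
    (K : X →L[ℂ] Y) {α : ℝ} (hα : 0 < α) (x u : X)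
    (hx : (α : ℂ) • x + (ContinuousLinearMap.adjoint K) (K x) = u) :
    α * ‖K x‖ ≤ Real.sqrt α * ‖u‖ := by
  have h := tikh_inner K α x u hx
  have hb1 := tikh_bound1 K hα x u hx
  have h2 : ‖K x‖^2 ≤ ‖u‖ * ‖x‖ := by
    calc ‖K x‖^2 ≤ α * ‖x‖^2 + ‖K x‖^2 := le_add_of_nonneg_left (by positivity)
    _ = RCLike.re (inner ℂ u x : ℂ) := h
    _ ≤ ‖u‖ * ‖x‖ := re_inner_le_norm u x
  have h3 : ‖K x‖^2 ≤ ‖u‖^2 / α := by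
    have : ‖x‖ ≤ ‖u‖ / α := by
      rw [le_div_iff₀ hα]; linarith [hb1]
    calc ‖K x‖^2 ≤ ‖u‖ * ‖x‖ := h2
    _ ≤ ‖u‖ * (‖u‖ / α) := by
        exact mul_le_mul_of_nonneg_left this (norm_nonneg u)
    _ = ‖u‖^2 / α := by ring
  -- α * ‖K x‖ ≤ √α * ‖u‖  ⟺  (α ‖Kx‖)^2 ≤ (√α ‖u‖)^2
  have hs : Real.sqrt α > 0 := Real.sqrt_pos.mpr hα
  have key : (α * ‖K x‖)^2 ≤ (Real.sqrt α * ‖u‖)^2 := by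
    have hsq : Real.sqrt α ^ 2 = α := Real.sq_sqrt hα.le
    calc (α * ‖K x‖)^2 = α^2 * ‖K x‖^2 := by ring
    _ ≤ α^2 * (‖u‖^2 / α) := by
        exact mul_le_mul_of_nonneg_left h3 (by positivity)
    _ = α * ‖u‖^2 := by field_simp
    _ = (Real.sqrt α * ‖u‖)^2 := by rw [mul_pow, hsq]
  calc α * ‖K x‖ = Real.sqrt ((α * ‖K x‖)^2) := (Real.sqrt_sq (by positivity)).symm
  _ ≤ Real.sqrt ((Real.sqrt α * ‖u‖)^2) := Real.sqrt_le_sqrt key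
  _ = Real.sqrt α * ‖u‖ := Real.sqrt_sq (by positivity)

/-- `‖K x‖ ≤ ‖w‖` when `(α I + K*K) x = K* w`. -/
lemma tikh_bound3 {X Y : Type*} [NormedAddCommGroup X] [InnerProductSpace ℂ X] [CompleteSpace X]
    [NormedAddCommGroup Y] [InnerProductSpace ℂ Y] [CompleteSpace Y]
    (K : X →L[ℂ] Y) {α : ℝ} (hα : 0 < α) (x : X) (w : Y)
    (hx : (α : ℂ) • x + (ContinuousLinearMap.adjoint K) (K x) =
      (ContinuousLinearMap.adjoint K) w) :
    ‖K x‖ ≤ ‖w‖ := by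
  have h := tikh_inner K α x _ hx
  have h2 : ‖K x‖^2 ≤ ‖w‖ * ‖K x‖ := by
    calc ‖K x‖^2 ≤ α * ‖x‖^2 + ‖K x‖^2 := le_add_of_nonneg_left (by positivity)
    _ = RCLike.re (inner ℂ ((ContinuousLinearMap.adjoint K) w) x : ℂ) := h
    _ = RCLike.re (inner ℂ w (K x) : ℂ) := by rw [ContinuousLinearMap.adjoint_inner_left]
    _ ≤ ‖w‖ * ‖K x‖ := re_inner_le_norm w (K x)
  rcases eq_or_lt_of_le (norm_nonneg (K x)) with h0 | h0
  · rw [← h0]; positivity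
  · nlinarith

/-- Tikhonov regularization: if `K` is a compact bounded operator with dense range,
`R α` is the inverse of `α I + K* K` for `α > 0`, and `x_α = R α (K* v)`, then
`K x_α → v` as `α → 0⁺` (since the range is dense, the orthogonal projection of `v`
onto the closure of the range of `K` is `v` itself). -/
theorem tikhonov_convergence
    {X Y : Type*} [NormedAddCommGroup X] [InnerProductSpace ℂ X] [CompleteSpace X]
    [NormedAddCommGroup Y] [InnerProductSpace ℂ Y] [CompleteSpace Y]
    (K : X →L[ℂ] Y) (hK : IsCompactOperator K) (hdense : Dense (Set.range K))
    (v : Y) (R : ℝ → X →L[ℂ] X)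
    (hR : ∀ α : ℝ, 0 < α →
      ((α : ℂ) • ContinuousLinearMap.id ℂ X
          + (ContinuousLinearMap.adjoint K).comp K).comp (R α) = ContinuousLinearMap.id ℂ X ∧
      (R α).comp ((α : ℂ) • ContinuousLinearMap.id ℂ X
          + (ContinuousLinearMap.adjoint K).comp K) = ContinuousLinearMap.id ℂ X) :
    Filter.Tendsto (fun α : ℝ => K (R α (ContinuousLinearMap.adjoint K v)))
      (nhdsWithin 0 (Set.Ioi 0)) (nhds v) := by
  rw [Metric.tendsto_nhdsWithin_nhds]
  intro ε hε
  obtain ⟨w, hwmem, hw⟩ := Metric.mem_closure_iff.mp (hdense v) (ε/3) (by positivity)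
  obtain ⟨u, rfl⟩ := hwmem
  have hu1 : (0:ℝ) < ‖u‖ + 1 := by positivity
  refine ⟨min 1 ((ε/3 / (‖u‖+1))^2), by positivity, ?_⟩
  intro α hα hdist
  have hα' : (0:ℝ) < α := hα
  have hαlt : α < (ε/3 / (‖u‖+1))^2 := by
    have hd : dist α 0 = α := by rw [Real.dist_eq, sub_zero, abs_of_pos hα']
    calc α = dist α 0 := hd.symm
    _ < _ := lt_of_lt_of_le hdist (min_le_right _ _)
  have hsqrt : Real.sqrt α < ε/3 / (‖u‖+1) := by
    have h := Real.sqrt_lt_sqrt hα'.le hαlt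
    rwa [Real.sqrt_sq (by positivity)] at h
  set A := ContinuousLinearMap.adjoint K with hA
  have hid1 : ∀ z : X, (α:ℂ) • (R α z) + A (K (R α z)) = z := by
    intro z
    have h := DFunLike.congr_fun (hR α hα').1 z
    simpa [ContinuousLinearMap.comp_apply, ContinuousLinearMap.add_apply,
      ContinuousLinearMap.smul_apply, ContinuousLinearMap.id_apply] using h
  have hid2 : (α:ℂ) • (R α u) + R α (A (K u)) = u := by
    have h := DFunLike.congr_fun (hR α hα').2 u
    simpa [ContinuousLinearMap.comp_apply, ContinuousLinearMap.add_apply,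
      ContinuousLinearMap.smul_apply, ContinuousLinearMap.id_apply, map_add, map_smul] using h
  have hterm1 : ‖K (R α (A v)) - K (R α (A (K u)))‖ ≤ ‖v - K u‖ := by
    have heq : K (R α (A v)) - K (R α (A (K u))) = K (R α (A (v - K u))) := by
      simp [map_sub]
    rw [heq]
    exact tikh_bound3 K hα' _ _ (hid1 (A (v - K u)))
  have hterm2 : ‖K (R α (A (K u))) - K u‖ ≤ Real.sqrt α * ‖u‖ := by
    have heq : R α (A (K u)) = u - (α:ℂ) • R α u := by
      rw [eq_sub_iff_add_eq, add_comm]; exact hid2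
    rw [heq]
    have h2 : K (u - (α:ℂ) • R α u) - K u = -((α:ℂ) • K (R α u)) := by
      simp [map_sub, map_smul]
    rw [h2, norm_neg, norm_smul]
    have h3 : ‖(α:ℂ)‖ = α := by
      rw [Complex.norm_real, Real.norm_eq_abs, abs_of_pos hα']
    rw [h3]
    exact tikh_bound2 K hα' _ _ (hid1 u)
  rw [dist_eq_norm]
  have hsplit : K (R α (A v)) - v = (K (R α (A v)) - K (R α (A (K u))))
      + (K (R α (A (K u))) - K u) + (K u - v) := by abel
  have h1 : ‖v - K u‖ < ε/3 := by rwa [dist_eq_norm] at hw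
  have h3 : ‖K u - v‖ < ε/3 := by rw [norm_sub_rev]; exact h1
  have h2 : Real.sqrt α * ‖u‖ < ε/3 := by
    calc Real.sqrt α * ‖u‖ ≤ Real.sqrt α * (‖u‖+1) := by
          nlinarith [Real.sqrt_nonneg α]
    _ < (ε/3/(‖u‖+1)) * (‖u‖+1) := mul_lt_mul_of_pos_right hsqrt hu1
    _ = ε/3 := by field_simp
  calc ‖K (R α (A v)) - v‖
      = ‖(K (R α (A v)) - K (R α (A (K u)))) + (K (R α (A (K u))) - K u) + (K u - v)‖ := by
        rw [hsplit]
    _ ≤ ‖K (R α (A v)) - K (R α (A (K u)))‖ + ‖K (R α (A (K u))) - K u‖ + ‖K u - v‖ :=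
        norm_add₃_le
    _ < ε := by linarith
end

section
/- Let X, Y be Hilbert spaces, K : X → Y compact and injective with dense range, v ∈ Y, and α_n → 0⁺. Define v_n = (α_n I + K*K)^{-1} K* v and u_n = K v_n. Then for every ε > 0 there exists N such that for all n > N, ‖u_n − v‖_Y ≤ ε. -/
open ContinuousLinearMap in
/-- Key variational estimate: if `(a • I + K*K) w = K* v` then `w` minimizes
`‖Ku - v‖² + a‖u‖²`, hence `‖Kw - v‖² ≤ ‖Kx - v‖² + a‖x‖²` for all `x`. -/
theorem tikhonov_key_estimate
    {X Y : Type*} [NormedAddCommGroup X] [InnerProductSpace ℂ X] [CompleteSpace X]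
    [NormedAddCommGroup Y] [InnerProductSpace ℂ Y] [CompleteSpace Y]
    (K : X →L[ℂ] Y) (v : Y) (a : ℝ) (ha : 0 ≤ a) (w x : X)
    (heq : (a : ℂ) • w + (adjoint K) (K w) = (adjoint K) v) :
    ‖K w - v‖ ^ 2 ≤ ‖K x - v‖ ^ 2 + a * ‖x‖ ^ 2 := by
  set d := x - w with hd
  have hx : x = w + d := by simp [hd]
  have hKx : K x - v = (K w - v) + K d := by
    rw [hx, map_add]; abel
  have hadj : (adjoint K) (K w - v) = -(a : ℂ) • w := by
    have : (adjoint K) (K w) - (adjoint K) v = -((a : ℂ) • w) := by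
      rw [← heq]; abel
    rw [map_sub, this, neg_smul]
  have hcross : (inner ℂ (K w - v) (K d) : ℂ) = -(a : ℂ) * inner ℂ w d := by
    rw [← ContinuousLinearMap.adjoint_inner_left, hadj, inner_smul_left]
    simp [Complex.conj_ofReal]
  have h1 : ‖K x - v‖ ^ 2
      = ‖K w - v‖ ^ 2 + 2 * Complex.re (inner ℂ (K w - v) (K d) : ℂ) + ‖K d‖ ^ 2 := by
    rw [hKx]; exact norm_add_sq (𝕜 := ℂ) _ _
  have h2 : ‖x‖ ^ 2 = ‖w‖ ^ 2 + 2 * Complex.re (inner ℂ w d : ℂ) + ‖d‖ ^ 2 := by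
    rw [hx]; exact norm_add_sq (𝕜 := ℂ) _ _
  have hre : Complex.re (inner ℂ (K w - v) (K d) : ℂ)
      = -a * Complex.re (inner ℂ w d : ℂ) := by
    rw [hcross]; simp [Complex.ofReal_mul]
  have hw2 : 0 ≤ a * ‖w‖ ^ 2 := by positivity
  have hd2 : 0 ≤ a * ‖d‖ ^ 2 := by positivity
  have hKd2 : 0 ≤ ‖K d‖ ^ 2 := by positivity
  nlinarith [h1, h2, hre]

/-- Tikhonov regularization sequence: if `K` is compact, injective, with dense range,
`α_n → 0⁺`, `R n` is the inverse of `α_n I + K*K`, `v_n = R n (K* v)` and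
`u_n = K v_n`, then `‖u_n − v‖ → 0`. -/
theorem tikhonov_sequence_convergence
    {X Y : Type*} [NormedAddCommGroup X] [InnerProductSpace ℂ X] [CompleteSpace X]
    [NormedAddCommGroup Y] [InnerProductSpace ℂ Y] [CompleteSpace Y]
    (K : X →L[ℂ] Y) (hK : IsCompactOperator K) (hinj : Function.Injective K)
    (hdense : Dense (Set.range K)) (v : Y)
    (α : ℕ → ℝ) (hαpos : ∀ n, 0 < α n)
    (hα : Filter.Tendsto α Filter.atTop (nhds 0))
    (R : ℕ → X →L[ℂ] X)
    (hR : ∀ n : ℕ,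
      (((α n : ℂ) • ContinuousLinearMap.id ℂ X
          + (ContinuousLinearMap.adjoint K).comp K).comp (R n) = ContinuousLinearMap.id ℂ X ∧
       (R n).comp ((α n : ℂ) • ContinuousLinearMap.id ℂ X
          + (ContinuousLinearMap.adjoint K).comp K) = ContinuousLinearMap.id ℂ X)) :
    ∀ ε > (0 : ℝ), ∃ N : ℕ, ∀ n > N,
      ‖K (R n (ContinuousLinearMap.adjoint K v)) - v‖ ≤ ε := by
  intro ε hε
  -- choose x with ‖K x - v‖ < ε/2
  obtain ⟨y, hy1, hy2⟩ := Metric.dense_iff.mp hdense v (ε / 2) (by positivity)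
  obtain ⟨x, rfl⟩ := hy2
  have hxv : ‖K x - v‖ < ε / 2 := by
    have := Metric.mem_ball.mp hy1
    rwa [dist_eq_norm] at this
  -- choose N with α n small for n ≥ N
  set δ : ℝ := ε ^ 2 / (4 * (‖x‖ ^ 2 + 1)) with hδ
  have hδpos : 0 < δ := by positivity
  have hev : ∀ᶠ n in Filter.atTop, α n < δ :=
    hα.eventually (Filter.Tendsto.eventually_lt_const hδpos Filter.tendsto_id)
  obtain ⟨N, hN⟩ := Filter.eventually_atTop.mp hev
  refine ⟨N, fun n hn => ?_⟩
  have hαn : α n < δ := hN n (le_of_lt hn)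
  -- key estimate
  have heq : ((α n : ℂ)) • (R n (ContinuousLinearMap.adjoint K v))
      + (ContinuousLinearMap.adjoint K) (K (R n (ContinuousLinearMap.adjoint K v)))
      = (ContinuousLinearMap.adjoint K) v := by
    have h := congrArg (fun (T : X →L[ℂ] X) => T (ContinuousLinearMap.adjoint K v)) (hR n).1
    simpa using h
  have hkey := tikhonov_key_estimate K v (α n) (le_of_lt (hαpos n))
    (R n (ContinuousLinearMap.adjoint K v)) x heq
  have hα2 : α n * ‖x‖ ^ 2 ≤ δ * (‖x‖ ^ 2 + 1) := by
    nlinarith [sq_nonneg ‖x‖, (hαpos n).le]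
  have hδ2 : δ * (‖x‖ ^ 2 + 1) = ε ^ 2 / 4 := by
    rw [hδ]; field_simp
  have hsq : ‖K (R n (ContinuousLinearMap.adjoint K v)) - v‖ ^ 2 ≤ ε ^ 2 / 4 + ε ^ 2 / 4 := by
    nlinarith [hkey, hxv, norm_nonneg (K x - v)]
  nlinarith [norm_nonneg (K (R n (ContinuousLinearMap.adjoint K v)) - v), hsq, hε]
end
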